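/- arXiv:1002.2942 — 2 statements merged into one kernel-verified Lean document; each statement's English description precedes it below -/
import Mathlib

section
/- Let f : X → X be a measure-preserving transformation of a probability space (X, μ) and let v : X → ℝⁿ be measurable. Suppose there is a hyperbolic matrix γ ∈ GL(n,ℝ) with v ∘ f = γ · v μ-almost everywhere. Then v = 0 μ-almost everywhere. -/
open Matrix MeasureTheory

/-- A real matrix is hyperbolic if it has no (complex) eigenvalue of modulus one. -/
def HyperbolicR {n : ℕ} (A : Matrix (Fin n) (Fin n) ℝ) : Prop :=
  ∀ z : ℂ, ‖z‖ = 1 → ¬ (A.map (fun a => (a : ℂ))).charpoly.IsRoot z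

open Polynomial Filter

section Decay

variable {A : Type*} [NormedRing A] [NormedAlgebra ℂ A]

lemma my_commute_factor (B : A) (z w : ℂ) :
    Commute (B - algebraMap ℂ A z) (B - algebraMap ℂ A w) := by
  have h1 : Commute B (algebraMap ℂ A w) := (Algebra.commutes w B).symm
  have h2 : Commute ((algebraMap ℂ A) z) B := Algebra.commutes z B
  have h3 : Commute ((algebraMap ℂ A) z) ((algebraMap ℂ A) w) := Algebra.commutes z _
  exact ((Commute.refl B).sub_right h1).sub_left (h2.sub_right h3)

lemma my_expand (B : A) (z : ℂ) (W : A) (k : ℕ) :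
    B ^ k * W = z ^ k • W +
      ∑ j ∈ Finset.range k, z ^ (k - 1 - j) • (B ^ j * ((B - algebraMap ℂ A z) * W)) := by
  induction k with
  | zero => simp
  | succ k ih =>
    have halg : (algebraMap ℂ A z) * W = z • W := (Algebra.smul_def z W).symm
    have hBW : B * W = z • W + (B - algebraMap ℂ A z) * W := by
      rw [sub_mul, halg]; abel
    rw [pow_succ', mul_assoc, ih, mul_add, Finset.mul_sum]
    simp only [mul_smul_comm, ← mul_assoc, ← pow_succ']
    rw [Finset.sum_range_succ']
    simp only [Nat.succ_sub_one, Nat.sub_zero, pow_zero, one_mul]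
    have hsum : ∑ x ∈ Finset.range k, z ^ (k - (x+1)) • (B ^ (x+1) * (B - algebraMap ℂ A z) * W)
        = ∑ x ∈ Finset.range k, z ^ (k - 1 - x) • (B ^ (x+1) * (B - algebraMap ℂ A z) * W) :=
      Finset.sum_congr rfl (fun x hx => by rw [show k - (x + 1) = k - 1 - x from by omega])
    rw [hsum]
    rw [hBW, smul_add, smul_smul, ← pow_succ]
    abel

end Decay

section Decay2

variable {A : Type*} [NormedRing A] [NormedAlgebra ℂ A]

lemma my_decay (B : A) (ρ : ℝ) (hρ : 0 < ρ) (hρ1 : ρ < 1) (s : List ℂ) :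
    (∀ z ∈ s, ‖z‖ < ρ) → ∀ W : A,
      (s.map (fun z => B - algebraMap ℂ A z)).prod * W = 0 →
      ∃ C : ℝ, 0 ≤ C ∧ ∀ k : ℕ, ‖B ^ k * W‖ ≤ C * ρ ^ k := by
  induction s with
  | nil =>
    intro _ W hW
    simp only [List.map_nil, List.prod_nil, one_mul] at hW
    exact ⟨0, le_refl 0, fun k => by simp [hW]⟩
  | cons z s ih =>
    intro hs W hW
    have hρ0 : ρ ≠ 0 := ne_of_gt hρ
    have hz : ‖z‖ < ρ := hs z (List.mem_cons_self)
    set U := (B - algebraMap ℂ A z) * W with hU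
    have hprodU : (s.map (fun z => B - algebraMap ℂ A z)).prod * U = 0 := by
      have hc : Commute ((s.map (fun z => B - algebraMap ℂ A z)).prod) (B - algebraMap ℂ A z) :=
        Commute.list_prod_left _ _ (by
          intro x hx
          obtain ⟨w, _, rfl⟩ := List.mem_map.1 hx
          exact my_commute_factor B w z)
      rw [hU, ← mul_assoc, hc.eq, mul_assoc]
      simpa [mul_assoc] using hW
    obtain ⟨C, hC0, hC⟩ := ih (fun w hw => hs w (List.mem_cons_of_mem z hw)) U hprodU
    set t : ℝ := ‖z‖ / ρ with ht
    have ht0 : 0 ≤ t := div_nonneg (norm_nonneg z) hρ.le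
    have ht1 : t < 1 := (div_lt_one hρ).2 hz
    have h1t : (0:ℝ) ≤ (1 - t)⁻¹ := inv_nonneg.2 (by linarith)
    have habs : ‖z‖ = t * ρ := by rw [ht, div_mul_cancel₀ _ hρ0]
    have hgeo : ∀ k : ℕ, (∑ i ∈ Finset.range k, t ^ i) ≤ (1 - t)⁻¹ := fun k =>
      (Summable.sum_le_tsum (Finset.range k) (fun i _ => pow_nonneg ht0 i)
        (summable_geometric_of_lt_one ht0 ht1)).trans_eq (tsum_geometric_of_lt_one ht0 ht1)
    refine ⟨‖W‖ + C * (1 - t)⁻¹ / ρ,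
      add_nonneg (norm_nonneg W) (div_nonneg (mul_nonneg hC0 h1t) hρ.le), fun k => ?_⟩
    have hexp := my_expand B z W k
    have hkey : ρ ^ (k-1) ≤ ρ ^ k / ρ := by
      rw [le_div_iff₀ hρ, ← pow_succ]
      rcases Nat.eq_zero_or_pos k with rfl | hk
      · simpa using hρ1.le
      · rw [show k - 1 + 1 = k from by omega]
    calc ‖B ^ k * W‖
        ≤ ‖z ^ k • W‖ + ‖∑ j ∈ Finset.range k, z ^ (k - 1 - j) • (B ^ j * U)‖ := by
          rw [hexp]; exact norm_add_le _ _
      _ ≤ ‖z‖ ^ k * ‖W‖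
            + ∑ j ∈ Finset.range k, ‖z‖ ^ (k - 1 - j) * (C * ρ ^ j) := by
          refine add_le_add ?_ ?_
          · rw [norm_smul, norm_pow]
          · refine (norm_sum_le _ _).trans (Finset.sum_le_sum fun j hj => ?_)
            rw [norm_smul, norm_pow]
            exact mul_le_mul_of_nonneg_left (hC j) (pow_nonneg (norm_nonneg z) _)
      _ ≤ ρ ^ k * ‖W‖ + ∑ j ∈ Finset.range k, C * (t ^ (k-1-j) * ρ ^ (k-1)) := by
          refine add_le_add
            (mul_le_mul_of_nonneg_right (pow_le_pow_left₀ (norm_nonneg z) hz.le k)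
              (norm_nonneg W))
            (Finset.sum_le_sum fun j hj => ?_)
          rw [habs, mul_pow]
          have hρρ : ρ ^ (k - 1 - j) * ρ ^ j = ρ ^ (k-1) := by
            rw [← pow_add]; congr 1; have := Finset.mem_range.1 hj; omega
          calc t ^ (k-1-j) * ρ ^ (k-1-j) * (C * ρ ^ j)
              = C * (t ^ (k-1-j) * (ρ ^ (k-1-j) * ρ ^ j)) := by ring
            _ = C * (t ^ (k-1-j) * ρ ^ (k-1)) := by rw [hρρ]
            _ ≤ C * (t ^ (k-1-j) * ρ ^ (k-1)) := le_rfl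
      _ ≤ ρ ^ k * ‖W‖ + C * (1-t)⁻¹ * ρ ^ (k-1) := by
          refine add_le_add le_rfl ?_
          have hsum : ∑ j ∈ Finset.range k, C * (t ^ (k-1-j) * ρ ^ (k-1))
              = C * ρ^(k-1) * ∑ j ∈ Finset.range k, t ^ (k-1-j) := by
            rw [Finset.mul_sum]; exact Finset.sum_congr rfl fun j hj => by ring
          have hre : ∑ j ∈ Finset.range k, t ^ (k-1-j) = ∑ j ∈ Finset.range k, t ^ j :=
            Finset.sum_range_reflect (fun j => t ^ j) k
          rw [hsum, hre]
          calc C * ρ^(k-1) * ∑ j ∈ Finset.range k, t ^ j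
              ≤ C * ρ^(k-1) * (1-t)⁻¹ :=
                mul_le_mul_of_nonneg_left (hgeo k)
                  (mul_nonneg hC0 (pow_nonneg hρ.le _))
            _ = C * (1-t)⁻¹ * ρ^(k-1) := by ring
      _ ≤ (‖W‖ + C * (1 - t)⁻¹ / ρ) * ρ ^ k := by
          calc ρ ^ k * ‖W‖ + C * (1-t)⁻¹ * ρ^(k-1)
              ≤ ρ ^ k * ‖W‖ + C * (1-t)⁻¹ * (ρ^k / ρ) := by
                refine add_le_add le_rfl (mul_le_mul_of_nonneg_left hkey (mul_nonneg hC0 h1t))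
            _ = (‖W‖ + C * (1 - t)⁻¹ / ρ) * ρ ^ k := by field_simp

end Decay2

section Key

variable {A : Type*} [Ring A] [Algebra ℂ A]

lemma my_commute_aeval (x B : A) (h : Commute x B) (q : ℂ[X]) :
    Commute x (aeval B q) := by
  rw [Polynomial.aeval_eq_sum_range]
  exact Commute.sum_right _ _ _ (fun i _ => ((h.pow_right i).smul_right _))

lemma my_single_inv (B B' : A) (hBB' : B * B' = 1) (z : ℂ) (hz : z ≠ 0) :
    B' - algebraMap ℂ A z⁻¹ = (-z⁻¹) • ((B - algebraMap ℂ A z) * B') := by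
  have h1 : (B - algebraMap ℂ A z) * B' = 1 - z • B' := by
    rw [sub_mul, hBB', Algebra.smul_def]
  rw [h1, smul_sub, smul_smul]
  rw [Algebra.algebraMap_eq_smul_one]
  have : -z⁻¹ * z = -1 := by field_simp
  rw [this]
  simp [neg_smul, sub_eq_add_neg]
  abel

lemma my_prod_inv (B B' : A) (hBB' : B * B' = 1) (hB'B : B' * B = 1) (l : List ℂ)
    (hl : ∀ z ∈ l, z ≠ 0) :
    (l.map (fun z => B' - algebraMap ℂ A z⁻¹)).prod =
      ((l.map (fun z => -z⁻¹)).prod) •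
        ((l.map (fun z => B - algebraMap ℂ A z)).prod * B' ^ l.length) := by
  have hcB'B : Commute B' B := hB'B.trans hBB'.symm
  induction l with
  | nil => simp
  | cons z l ih =>
    have hz : z ≠ 0 := hl z (List.mem_cons_self)
    have ih' := ih (fun w hw => hl w (List.mem_cons_of_mem z hw))
    simp only [List.map_cons, List.prod_cons, List.length_cons]
    rw [ih', my_single_inv B B' hBB' z hz]
    have hcomm : Commute B' ((l.map (fun z => B - algebraMap ℂ A z)).prod) := by
      refine Commute.list_prod_right _ _ ?_
      intro x hx
      obtain ⟨w, _, rfl⟩ := List.mem_map.1 hx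
      exact hcB'B.sub_right ((Algebra.commutes w B').symm)
    rw [smul_mul_assoc, mul_smul_comm, smul_smul]
    congr 1
    rw [mul_assoc, ← mul_assoc B' _ _, hcomm.eq, mul_assoc, ← pow_succ', ← mul_assoc]

end Key

section Cop

lemma my_coprime_single (a : ℂ) (u : Multiset ℂ) (h : ∀ b ∈ u, a ≠ b) :
    IsCoprime (X - C a) ((u.map (fun b => X - C b)).prod) := by
  induction u using Multiset.induction_on with
  | empty => simpa using isCoprime_one_right
  | cons b v ih =>
    rw [Multiset.map_cons, Multiset.prod_cons]
    exact (isCoprime_X_sub_C_of_isUnit_sub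
      ((sub_ne_zero.2 (h b (Multiset.mem_cons_self b v))).isUnit)).mul_right
      (ih fun c hc => h c (Multiset.mem_cons_of_mem hc))

lemma my_coprime (t u : Multiset ℂ) (h : ∀ a ∈ t, ∀ b ∈ u, a ≠ b) :
    IsCoprime ((t.map (fun a => X - C a)).prod) ((u.map (fun a => X - C a)).prod) := by
  induction t using Multiset.induction_on with
  | empty => simpa using isCoprime_one_left
  | cons a s ih =>
    rw [Multiset.map_cons, Multiset.prod_cons]
    exact (my_coprime_single a u (h a (Multiset.mem_cons_self a s))).mul_left
      (ih fun c hc => h c (Multiset.mem_cons_of_mem hc))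

lemma my_exists_rho (l : List ℂ) (h : ∀ z ∈ l, ‖z‖ < 1) :
    ∃ ρ : ℝ, 0 < ρ ∧ ρ < 1 ∧ ∀ z ∈ l, ‖z‖ < ρ := by
  induction l with
  | nil => exact ⟨1/2, by norm_num, by norm_num, by simp⟩
  | cons a l ih =>
    obtain ⟨ρ, h0, h1, hρ⟩ := ih (fun z hz => h z (List.mem_cons_of_mem a hz))
    have ha := h a (List.mem_cons_self)
    have hab := norm_nonneg a
    refine ⟨max ρ ((‖a‖ + 1)/2), lt_max_of_lt_left h0,
      max_lt h1 (by linarith), ?_⟩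
    intro z hz
    rcases List.mem_cons.1 hz with rfl | hz
    · exact lt_of_lt_of_le (by linarith) (le_max_right _ _)
    · exact lt_of_lt_of_le (hρ z hz) (le_max_left _ _)

end Cop

section KeyMatrix

open Matrix

attribute [local instance] Matrix.linftyOpNormedRing Matrix.linftyOpNormedAlgebra

variable {n : ℕ}

lemma my_key (B B' : Matrix (Fin n) (Fin n) ℂ) (hBB' : B * B' = 1) (hB'B : B' * B = 1)
    (hyp : ∀ z : ℂ, ‖z‖ = 1 → ¬ B.charpoly.IsRoot z) :
    ∃ (P Q : Matrix (Fin n) (Fin n) ℂ) (C ρ : ℝ), 0 ≤ C ∧ 0 < ρ ∧ ρ < 1 ∧ P + Q = 1 ∧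
      (∀ (w : Fin n → ℂ) (k : ℕ), ‖P.mulVec w‖ ≤ C * ρ ^ k * ‖(B' ^ k).mulVec w‖) ∧
      (∀ (w : Fin n → ℂ) (k : ℕ), ‖Q.mulVec w‖ ≤ C * ρ ^ k * ‖(B ^ k).mulVec w‖) := by
  classical
  set p := B.charpoly with hpdef
  have hmonic : p.Monic := B.charpoly_monic
  have hp0 : p ≠ 0 := hmonic.ne_zero
  have hsplits : p.Splits := IsAlgClosed.splits p
  have hcard : p.roots.card = p.natDegree := (splits_iff_card_roots).1 hsplits
  have hp : p = (p.roots.map (fun a => X - C a)).prod :=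
    (prod_multiset_X_sub_C_of_monic_of_roots_card_eq hmonic hcard).symm
  set r₁ := p.roots.filter (fun z => ‖z‖ < 1) with hr₁def
  set r₂ := p.roots.filter (fun z => ¬ ‖z‖ < 1) with hr₂def
  have hr : r₁ + r₂ = p.roots := Multiset.filter_add_not _ _
  have hroots1 : ∀ z ∈ r₁, ‖z‖ < 1 := fun z hz => (Multiset.mem_filter.1 hz).2
  have hroots2 : ∀ z ∈ r₂, 1 < ‖z‖ := by
    intro z hz
    obtain ⟨hzr, hlt⟩ := Multiset.mem_filter.1 hz
    rcases lt_trichotomy (‖z‖) 1 with h | h | h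
    · exact absurd h hlt
    · exact absurd (isRoot_of_mem_roots hzr) (hyp z h)
    · exact h
  set p₁ := (r₁.map (fun a => X - C a)).prod with hp₁def
  set p₂ := (r₂.map (fun a => X - C a)).prod with hp₂def
  have hpmul : p₁ * p₂ = p := by
    conv_rhs => rw [hp, ← hr]
    rw [Multiset.map_add, Multiset.prod_add]
  have hcop : IsCoprime p₁ p₂ := by
    refine my_coprime r₁ r₂ fun a ha b hb => ?_
    have h1 := hroots1 a ha
    have h2 := hroots2 b hb
    intro hEq; rw [hEq] at h1; linarith
  obtain ⟨a, b, hab⟩ := hcop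
  set P := aeval B (b * p₂) with hPdef
  set Q := aeval B (a * p₁) with hQdef
  have hCH : aeval B p = 0 := B.aeval_self_charpoly
  have hPQ : P + Q = 1 := by
    have h := congrArg (aeval B) hab
    rw [map_add, _root_.map_one] at h
    rw [hPdef, hQdef, add_comm]
    exact h
  have hkillP : aeval B p₁ * P = 0 := by
    have h1 : p₁ * (b * p₂) = b * p := by rw [← hpmul]; ring
    rw [hPdef, ← _root_.map_mul, h1, _root_.map_mul, hCH, mul_zero]
  have hkillQ : aeval B p₂ * Q = 0 := by
    have h1 : p₂ * (a * p₁) = a * p := by rw [← hpmul]; ring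
    rw [hQdef, ← _root_.map_mul, h1, _root_.map_mul, hCH, mul_zero]
  -- lists
  have haeval_prod : ∀ (r : Multiset ℂ),
      aeval B ((r.map (fun c => X - C c)).prod)
        = (r.toList.map (fun z => B - algebraMap ℂ (Matrix (Fin n) (Fin n) ℂ) z)).prod := by
    intro r
    conv_lhs => rw [← Multiset.coe_toList r]
    rw [Multiset.map_coe, Multiset.prod_coe]
    rw [map_list_prod (aeval B)]
    rw [List.map_map]
    refine congrArg List.prod (List.map_congr_left fun z hz => ?_)
    simp [Function.comp, Polynomial.aeval_X, Polynomial.aeval_C, Algebra.algebraMap_eq_smul_one]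
  have hcB'B : Commute B' B := hB'B.trans hBB'.symm
  have hcBB' : Commute B B' := hBB'.trans hB'B.symm
  -- decay for P along B
  obtain ⟨ρ₁, hρ₁0, hρ₁1, hρ₁⟩ := my_exists_rho r₁.toList
    (fun z hz => hroots1 z (Multiset.mem_toList.1 hz))
  have hkillP' : ((r₁.toList.map (fun z => B - algebraMap ℂ _ z)).prod) * P = 0 := by
    rw [← haeval_prod r₁]; exact hkillP
  obtain ⟨C₁, hC₁0, hC₁⟩ := my_decay B ρ₁ hρ₁0 hρ₁1 r₁.toList hρ₁ P hkillP'
  -- decay for Q along B'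
  have hz2ne : ∀ z ∈ r₂, z ≠ 0 := by
    intro z hz h0
    have := hroots2 z hz
    rw [h0] at this
    simp only [norm_zero] at this
    linarith
  set l₂ : List ℂ := r₂.toList.map (fun z => z⁻¹) with hl₂def
  have hl₂abs : ∀ z ∈ l₂, ‖z‖ < 1 := by
    intro z hz
    obtain ⟨w, hw, rfl⟩ := List.mem_map.1 hz
    have h1 := hroots2 w (Multiset.mem_toList.1 hw)
    rw [norm_inv]
    exact inv_lt_one_of_one_lt₀ h1
  obtain ⟨ρ₂, hρ₂0, hρ₂1, hρ₂⟩ := my_exists_rho l₂ hl₂abs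
  have hcomQB' : Commute Q B' := (my_commute_aeval B' B hcB'B _).symm
  have hcomQB : Commute Q B := (my_commute_aeval B B (Commute.refl B) _).symm
  have hcomPB' : Commute P B' := (my_commute_aeval B' B hcB'B _).symm
  have hkillQ' : ((l₂.map (fun z => B' - algebraMap ℂ _ z)).prod) * Q = 0 := by
    rw [hl₂def, List.map_map]
    have hmi := my_prod_inv B B' hBB' hB'B r₂.toList
      (fun z hz => hz2ne z (Multiset.mem_toList.1 hz))
    rw [show (List.map ((fun z => B' - algebraMap ℂ (Matrix (Fin n) (Fin n) ℂ) z) ∘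
        fun z => z⁻¹) r₂.toList)
      = (List.map (fun z => B' - algebraMap ℂ (Matrix (Fin n) (Fin n) ℂ) z⁻¹) r₂.toList)
      from rfl]
    rw [hmi, smul_mul_assoc, mul_assoc, ((hcomQB'.pow_right _).symm).eq, ← mul_assoc]
    have h2 : ((r₂.toList.map (fun z => B - algebraMap ℂ (Matrix (Fin n) (Fin n) ℂ) z)).prod) * Q = 0 := by
      rw [← haeval_prod r₂]; exact hkillQ
    rw [h2, zero_mul, smul_zero]
  obtain ⟨C₂, hC₂0, hC₂⟩ := my_decay B' ρ₂ hρ₂0 hρ₂1 l₂ hρ₂ Q hkillQ'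
  have hpow1 : ∀ k : ℕ, B ^ k * B' ^ k = 1 := by
    intro k
    rw [← hcBB'.mul_pow, hBB', one_pow]
  have hpow2 : ∀ k : ℕ, B' ^ k * B ^ k = 1 := by
    intro k
    rw [← hcB'B.mul_pow, hB'B, one_pow]
  refine ⟨P, Q, max C₁ C₂, max ρ₁ ρ₂, le_trans hC₁0 (le_max_left _ _),
    lt_max_of_lt_left hρ₁0, max_lt hρ₁1 hρ₂1, hPQ, ?_, ?_⟩
  · intro w k
    have hPid : (B ^ k * P) * B' ^ k = P := by
      rw [mul_assoc, (hcomPB'.pow_right k).eq, ← mul_assoc, hpow1 k, one_mul]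
    calc ‖P.mulVec w‖ = ‖((B ^ k * P) * B' ^ k).mulVec w‖ := by rw [hPid]
      _ = ‖(B ^ k * P).mulVec ((B' ^ k).mulVec w)‖ := by rw [Matrix.mulVec_mulVec]
      _ ≤ ‖B ^ k * P‖ * ‖(B' ^ k).mulVec w‖ := Matrix.linfty_opNorm_mulVec _ _
      _ ≤ (C₁ * ρ₁ ^ k) * ‖(B' ^ k).mulVec w‖ :=
          mul_le_mul_of_nonneg_right (hC₁ k) (norm_nonneg _)
      _ ≤ (max C₁ C₂ * (max ρ₁ ρ₂) ^ k) * ‖(B' ^ k).mulVec w‖ :=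
          mul_le_mul_of_nonneg_right
            (mul_le_mul (le_max_left _ _)
              (pow_le_pow_left₀ hρ₁0.le (le_max_left _ _) k)
              (pow_nonneg hρ₁0.le k) (le_trans hC₁0 (le_max_left _ _)))
            (norm_nonneg _)
  · intro w k
    have hQid : (B' ^ k * Q) * B ^ k = Q := by
      rw [mul_assoc, (hcomQB.pow_right k).eq, ← mul_assoc, hpow2 k, one_mul]
    calc ‖Q.mulVec w‖ = ‖((B' ^ k * Q) * B ^ k).mulVec w‖ := by rw [hQid]
      _ = ‖(B' ^ k * Q).mulVec ((B ^ k).mulVec w)‖ := by rw [Matrix.mulVec_mulVec]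
      _ ≤ ‖B' ^ k * Q‖ * ‖(B ^ k).mulVec w‖ := Matrix.linfty_opNorm_mulVec _ _
      _ ≤ (C₂ * ρ₂ ^ k) * ‖(B ^ k).mulVec w‖ :=
          mul_le_mul_of_nonneg_right (hC₂ k) (norm_nonneg _)
      _ ≤ (max C₁ C₂ * (max ρ₁ ρ₂) ^ k) * ‖(B ^ k).mulVec w‖ :=
          mul_le_mul_of_nonneg_right
            (mul_le_mul (le_max_right _ _)
              (pow_le_pow_left₀ hρ₂0.le (le_max_right _ _) k)
              (pow_nonneg hρ₂0.le k) (le_trans hC₁0 (le_max_left _ _)))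
            (norm_nonneg _)

end KeyMatrix


section Main

attribute [local instance] Matrix.linftyOpNormedRing Matrix.linftyOpNormedAlgebra

/-- If `f` is an invertible measure-preserving transformation of a probability
space `(X, μ)`, `v : X → ℝⁿ` is measurable, and `v ∘ f = γ · v` μ-a.e. for some hyperbolic
`γ ∈ GL(n,ℝ)`, then `v = 0` μ-a.e. -/
theorem stmt_2 {n : ℕ} {X : Type*} [MeasurableSpace X]
    (μ : Measure X) [IsProbabilityMeasure μ]
    (f : X ≃ᵐ X) (hf : MeasurePreserving f μ μ)
    (v : X → Fin n → ℝ) (hv : Measurable v)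
    (γ : Matrix (Fin n) (Fin n) ℝ) (hγinv : IsUnit γ) (hγ : HyperbolicR γ)
    (heq : ∀ᵐ x ∂μ, v (f x) = γ.mulVec (v x)) :
    v =ᵐ[μ] 0 := by
  classical
  obtain ⟨u, hu⟩ := hγinv
  set γ' : Matrix (Fin n) (Fin n) ℝ := ↑u⁻¹ with hγ'def
  have hγγ' : γ * γ' = 1 := by rw [← hu, hγ'def]; exact u.mul_inv
  have hγ'γ : γ' * γ = 1 := by rw [← hu, hγ'def]; exact u.inv_mul
  set B : Matrix (Fin n) (Fin n) ℂ := γ.map (fun a => (a : ℂ)) with hBdef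
  set B' : Matrix (Fin n) (Fin n) ℂ := γ'.map (fun a => (a : ℂ)) with hB'def
  have hBalt : B = Complex.ofRealHom.mapMatrix γ := rfl
  have hB'alt : B' = Complex.ofRealHom.mapMatrix γ' := rfl
  have hBB' : B * B' = 1 := by
    rw [hBalt, hB'alt, ← _root_.map_mul, hγγ', _root_.map_one]
  have hB'B : B' * B = 1 := by
    rw [hBalt, hB'alt, ← _root_.map_mul, hγ'γ, _root_.map_one]
  obtain ⟨P, Q, C, ρ, hC0, hρ0, hρ1, hPQ, hPest, hQest⟩ := my_key B B' hBB' hB'B hγ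
  -- complexification of vectors
  set vC : X → Fin n → ℂ := fun x i => ((v x i : ℝ) : ℂ) with hvCdef
  have hmapk : ∀ (M : Matrix (Fin n) (Fin n) ℝ) (k : ℕ) (w : Fin n → ℝ),
      ((Complex.ofRealHom.mapMatrix M) ^ k).mulVec (fun i => ((w i : ℝ) : ℂ))
        = fun i => (((M ^ k).mulVec w i : ℝ) : ℂ) := by
    intro M k w
    funext i
    rw [← map_pow, RingHom.mapMatrix_apply]
    exact (RingHom.map_mulVec Complex.ofRealHom (M ^ k) w i).symm
  have hnorm : ∀ w : Fin n → ℝ, ‖(fun i => ((w i : ℝ) : ℂ))‖ = ‖w‖ := by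
    intro w
    rw [Pi.norm_def, Pi.norm_def]
    congr 1
    exact Finset.sup_congr rfl fun i _ => Complex.nnnorm_real (w i)
  have hne0 : ∀ w : Fin n → ℝ, w ≠ 0 → (fun i => ((w i : ℝ) : ℂ)) ≠ 0 := by
    intro w hw h0
    apply hw
    funext i
    have := congrFun h0 i
    simpa using this
  -- a.e. forward orbit
  have hstep : ∀ᵐ x ∂μ, ∀ k : ℕ, v (f (f^[k] x)) = γ.mulVec (v (f^[k] x)) := by
    rw [MeasureTheory.ae_all_iff]
    intro k
    exact ((hf.iterate k).quasiMeasurePreserving).ae heq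
  have hfwd : ∀ᵐ x ∂μ, ∀ k : ℕ, v (f^[k] x) = (γ ^ k).mulVec (v x) := by
    filter_upwards [hstep] with x hx
    intro k
    induction k with
    | zero => simp [Matrix.one_mulVec]
    | succ k ih =>
      rw [Function.iterate_succ_apply', hx k, ih, Matrix.mulVec_mulVec, ← pow_succ']
  have hfsymm : MeasurePreserving f.symm μ μ := hf.symm f
  have hbstep0 : ∀ᵐ y ∂μ, v y = γ.mulVec (v (f.symm y)) := by
    have h := hfsymm.quasiMeasurePreserving.ae heq
    filter_upwards [h] with y hy
    simpa using hy
  have hbstep1 : ∀ᵐ y ∂μ, v (f.symm y) = γ'.mulVec (v y) := by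
    filter_upwards [hbstep0] with y hy
    rw [hy, Matrix.mulVec_mulVec, hγ'γ, Matrix.one_mulVec]
  have hbstep : ∀ᵐ x ∂μ, ∀ k : ℕ, v (f.symm (f.symm^[k] x)) = γ'.mulVec (v (f.symm^[k] x)) := by
    rw [MeasureTheory.ae_all_iff]
    intro k
    exact ((hfsymm.iterate k).quasiMeasurePreserving).ae hbstep1
  have hbwd : ∀ᵐ x ∂μ, ∀ k : ℕ, v (f.symm^[k] x) = (γ' ^ k).mulVec (v x) := by
    filter_upwards [hbstep] with x hx
    intro k
    induction k with
    | zero => simp [Matrix.one_mulVec]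
    | succ k ih =>
      rw [Function.iterate_succ_apply', hx k, ih, Matrix.mulVec_mulVec, ← pow_succ']
  -- norms along orbits
  have horbf : ∀ᵐ x ∂μ, ∀ k : ℕ, ‖(B ^ k).mulVec (vC x)‖ = ‖v (f^[k] x)‖ := by
    filter_upwards [hfwd] with x hx
    intro k
    rw [hvCdef]
    show ‖(B ^ k).mulVec (fun i => ((v x i : ℝ) : ℂ))‖ = _
    rw [hBalt, hmapk γ k (v x), hnorm, hx k]
  have horbb : ∀ᵐ x ∂μ, ∀ k : ℕ, ‖(B' ^ k).mulVec (vC x)‖ = ‖v (f.symm^[k] x)‖ := by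
    filter_upwards [hbwd] with x hx
    intro k
    rw [hvCdef]
    show ‖(B' ^ k).mulVec (fun i => ((v x i : ℝ) : ℂ))‖ = _
    rw [hB'alt, hmapk γ' k (v x), hnorm, hx k]
  -- main contradiction
  rw [Filter.eventuallyEq_iff_exists_mem]
  by_contra hcon
  have hne : μ {x | v x ≠ 0} ≠ 0 := by
    intro h0
    exact hcon ⟨{x | v x = 0}, by rwa [MeasureTheory.mem_ae_iff, show {x | v x = 0}ᶜ = {x | v x ≠ 0} from rfl], fun x hx => hx⟩
  -- measurability
  have hmvne : MeasurableSet {x | v x ≠ 0} := (hv (measurableSet_singleton 0)).compl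
  have hmnorm : Measurable fun x => ‖v x‖ := hv.norm
  have hQmeas : Measurable fun x => Q.mulVec (vC x) := by
    apply measurable_pi_lambda
    intro i
    show Measurable fun x => ∑ j, Q i j * (vC x j)
    refine Finset.measurable_sum _ fun j _ => ?_
    exact measurable_const.mul (Complex.measurable_ofReal.comp ((measurable_pi_apply j).comp hv))
  have hQset : MeasurableSet {x | Q.mulVec (vC x) ≠ 0} :=
    (hQmeas (measurableSet_singleton 0)).compl
  set S : ℕ → Set X := fun m => {x | v x ≠ 0 ∧ ‖v x‖ ≤ (m : ℝ)} with hSdef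
  have hSmeas : ∀ m, MeasurableSet (S m) := fun m =>
    hmvne.inter (measurableSet_le hmnorm measurable_const)
  have hSunion : {x | v x ≠ 0} ⊆ ⋃ m : ℕ, S m := by
    intro x hx
    exact Set.mem_iUnion.2 ⟨⌈‖v x‖⌉₊, hx, Nat.le_ceil _⟩
  obtain ⟨m, hm⟩ : ∃ m : ℕ, μ (S m) ≠ 0 := by
    by_contra hall
    push_neg at hall
    have : μ (⋃ m : ℕ, S m) = 0 := MeasureTheory.measure_iUnion_null hall
    exact hne (MeasureTheory.measure_mono_null hSunion this)
  set Sp := S m ∩ {x | Q.mulVec (vC x) ≠ 0} with hSpdef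
  set Sm := S m ∩ {x | Q.mulVec (vC x) ≠ 0}ᶜ with hSmdef
  have hsplit : S m = Sp ∪ Sm := by
    rw [hSpdef, hSmdef, ← Set.inter_union_distrib_left, Set.union_compl_self, Set.inter_univ]
  have : μ Sp ≠ 0 ∨ μ Sm ≠ 0 := by
    by_contra hboth
    push_neg at hboth
    have : μ (S m) = 0 := by
      rw [hsplit]
      exact MeasureTheory.measure_union_null hboth.1 hboth.2
    exact hm this
  have hCρ : ∀ k : ℕ, (0:ℝ) ≤ C * ρ ^ k := fun k => mul_nonneg hC0 (pow_nonneg hρ0.le k)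
  have htend : Filter.Tendsto (fun k : ℕ => C * ρ ^ k * (m:ℝ)) Filter.atTop (nhds 0) := by
    have h1 : Filter.Tendsto (fun k : ℕ => ρ ^ k) Filter.atTop (nhds 0) :=
      tendsto_pow_atTop_nhds_zero_of_lt_one hρ0.le hρ1
    have h2 := (h1.const_mul C).mul_const (m:ℝ)
    simpa using h2
  rcases this with hplus | hminus
  · -- expanding case: use forward recurrence
    have hcons : MeasureTheory.Conservative f μ := hf.conservative
    have hrec := hcons.ae_mem_imp_frequently_image_mem (hSmeas m).nullMeasurableSet
    have hfreq : ∃ᶠ x in MeasureTheory.ae μ, x ∈ Sp := by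
      rwa [MeasureTheory.frequently_ae_mem_iff]
    obtain ⟨x, hxSp, hxrec, hxorb⟩ := (hfreq.and_eventually (hrec.and horbf)).exists
    have hxS : x ∈ S m := hxSp.1
    have hxQ : Q.mulVec (vC x) ≠ 0 := hxSp.2
    have hε : 0 < ‖Q.mulVec (vC x)‖ := norm_pos_iff.2 hxQ
    have hev : ∀ᶠ k in Filter.atTop, C * ρ ^ k * (m:ℝ) < ‖Q.mulVec (vC x)‖ :=
      htend.eventually_lt_const hε
    obtain ⟨k, hk1, hk2⟩ := ((hxrec hxS).and_eventually hev).exists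
    have hb1 : ‖Q.mulVec (vC x)‖ ≤ C * ρ ^ k * ‖(B ^ k).mulVec (vC x)‖ := hQest (vC x) k
    rw [hxorb k] at hb1
    have hb2 : ‖v (f^[k] x)‖ ≤ (m:ℝ) := hk1.2
    have : ‖Q.mulVec (vC x)‖ ≤ C * ρ ^ k * (m:ℝ) :=
      hb1.trans (mul_le_mul_of_nonneg_left hb2 (hCρ k))
    linarith
  · -- contracting case: use backward recurrence
    have hcons : MeasureTheory.Conservative f.symm μ := hfsymm.conservative
    have hrec := hcons.ae_mem_imp_frequently_image_mem (hSmeas m).nullMeasurableSet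
    have hfreq : ∃ᶠ x in MeasureTheory.ae μ, x ∈ Sm := by
      rwa [MeasureTheory.frequently_ae_mem_iff]
    obtain ⟨x, hxSm, hxrec, hxorb⟩ := (hfreq.and_eventually (hrec.and horbb)).exists
    have hxS : x ∈ S m := hxSm.1
    have hxQ0 : Q.mulVec (vC x) = 0 := by
      have := hxSm.2
      simpa using this
    have hxP : P.mulVec (vC x) = vC x := by
      have h1 : (P + Q).mulVec (vC x) = vC x := by rw [hPQ, Matrix.one_mulVec]
      rw [Matrix.add_mulVec, hxQ0, add_zero] at h1
      exact h1
    have hxne : vC x ≠ 0 := hne0 (v x) hxS.1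
    have hε : 0 < ‖P.mulVec (vC x)‖ := by
      rw [hxP]
      exact norm_pos_iff.2 hxne
    have hev : ∀ᶠ k in Filter.atTop, C * ρ ^ k * (m:ℝ) < ‖P.mulVec (vC x)‖ :=
      htend.eventually_lt_const hε
    obtain ⟨k, hk1, hk2⟩ := ((hxrec hxS).and_eventually hev).exists
    have hb1 : ‖P.mulVec (vC x)‖ ≤ C * ρ ^ k * ‖(B' ^ k).mulVec (vC x)‖ := hPest (vC x) k
    rw [hxorb k] at hb1
    have hb2 : ‖v (f.symm^[k] x)‖ ≤ (m:ℝ) := hk1.2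
    have : ‖P.mulVec (vC x)‖ ≤ C * ρ ^ k * (m:ℝ) :=
      hb1.trans (mul_le_mul_of_nonneg_left hb2 (hCρ k))
    linarith

end Main
end

section
/- Let γ ∈ SL(n,ℤ) be hyperbolic (no eigenvalues on the unit circle). If h₁, h₂ : 𝕋ⁿ → 𝕋ⁿ are two continuous maps homotopic to the identity with hᵢ ∘ f = ρ₀(γ) ∘ hᵢ (i = 1,2) for some homeomorphism f of 𝕋ⁿ, then h₁ − h₂ is a constant c with (I − γ)c ∈ ℤⁿ, i.e., c is a fixed point of ρ₀(γ) on the torus. -/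
open Matrix MeasureTheory

/-- The integer lattice `ℤⁿ ⊂ ℝⁿ`. -/
def IntLattice (n : ℕ) : AddSubgroup (Fin n → ℝ) where
  carrier := {x | ∀ i, ∃ m : ℤ, x i = (m : ℝ)}
  zero_mem' := fun i => ⟨0, by simp⟩
  add_mem' := by
    rintro a b ha hb i
    obtain ⟨p, hp⟩ := ha i
    obtain ⟨q, hq⟩ := hb i
    exact ⟨p + q, by simp [hp, hq]⟩
  neg_mem' := by
    rintro a ha i
    obtain ⟨p, hp⟩ := ha i
    exact ⟨-p, by simp [hp]⟩

/-- The torus `𝕋ⁿ = ℝⁿ/ℤⁿ`. -/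
abbrev Torus (n : ℕ) := (Fin n → ℝ) ⧸ IntLattice n

/-- Projection `ℝⁿ → 𝕋ⁿ`. -/
def mkT {n : ℕ} (x : Fin n → ℝ) : Torus n := QuotientAddGroup.mk x

/-- The toral endomorphism induced by an integer matrix. -/
noncomputable def toralMap {n : ℕ} (γ : Matrix (Fin n) (Fin n) ℤ) : Torus n → Torus n :=
  QuotientAddGroup.map _ _ ((γ.map (Int.cast : ℤ → ℝ)).mulVecLin).toAddMonoidHom
    (by
      intro x hx
      simp only [AddSubgroup.mem_comap]
      intro i
      refine ⟨∑ j, γ i j * (hx j).choose, ?_⟩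
      simp only [LinearMap.toAddMonoidHom_coe, Matrix.mulVecLin_apply, Matrix.mulVec,
        dotProduct, Matrix.map_apply]
      push_cast
      exact Finset.sum_congr rfl fun j _ => by
        conv_lhs => rw [(hx j).choose_spec])

/-- An integer matrix is hyperbolic if it has no (complex) eigenvalue of modulus one. -/
def HyperbolicZ {n : ℕ} (A : Matrix (Fin n) (Fin n) ℤ) : Prop :=
  ∀ z : ℂ, ‖z‖ = 1 → ¬ (A.map (fun a => (a : ℂ))).charpoly.IsRoot z


section Stmt6Helpers

open Matrix Polynomial


variable {n : ℕ}

lemma my_eval_charpoly {R : Type*} [CommRing R] (M : Matrix (Fin n) (Fin n) R) (t : R) :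
    M.charpoly.eval t = (t • (1 : Matrix (Fin n) (Fin n) R) - M).det := by
  rw [Matrix.charpoly, ← Polynomial.coe_evalRingHom, RingHom.map_det]
  congr 1
  ext i j
  rcases eq_or_ne i j with rfl | h
  · simp [charmatrix_apply_eq, Matrix.one_apply]
  · simp [charmatrix_apply_ne _ _ _ h, Matrix.one_apply_ne h, Matrix.smul_apply]

lemma key_bounded_orbit (B B' : Matrix (Fin n) (Fin n) ℂ) (hBB' : B * B' = 1)
    (hev : ∀ z : ℂ, ‖z‖ = 1 → ¬ B.charpoly.IsRoot z)
    (y : Fin n → ℂ) (C : ℝ)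
    (h1 : ∀ k : ℕ, ‖(B ^ k) *ᵥ y‖ ≤ C) (h2 : ∀ k : ℕ, ‖(B' ^ k) *ᵥ y‖ ≤ C) :
    y = 0 := by
  by_contra hy
  have hB'B : B' * B = 1 := mul_eq_one_comm.mp hBB'
  set W : Submodule ℂ (Fin n → ℂ) :=
    { carrier := {u | ∃ D : ℝ, (∀ k : ℕ, ‖(B ^ k) *ᵥ u‖ ≤ D) ∧ ∀ k : ℕ, ‖(B' ^ k) *ᵥ u‖ ≤ D}
      add_mem' := by
        rintro a b ⟨D, hD1, hD2⟩ ⟨E, hE1, hE2⟩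
        refine ⟨D + E, fun k => ?_, fun k => ?_⟩
        · rw [Matrix.mulVec_add]
          exact (norm_add_le _ _).trans (add_le_add (hD1 k) (hE1 k))
        · rw [Matrix.mulVec_add]
          exact (norm_add_le _ _).trans (add_le_add (hD2 k) (hE2 k))
      zero_mem' := ⟨0, fun k => by simp [Matrix.mulVec_zero], fun k => by simp [Matrix.mulVec_zero]⟩
      smul_mem' := by
        rintro c a ⟨D, hD1, hD2⟩
        have hD0 : (0:ℝ) ≤ D := le_trans (norm_nonneg _) (hD1 0)
        refine ⟨‖c‖ * D, fun k => ?_, fun k => ?_⟩ <;>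
          · rw [Matrix.mulVec_smul, norm_smul]
            gcongr
            first | exact hD1 k | exact hD2 k } with hWdef
  have hyW : y ∈ W := ⟨C, h1, h2⟩
  have hstab : ∀ u ∈ W, B.mulVecLin u ∈ W := by
    rintro u ⟨D, hD1, hD2⟩
    refine ⟨D, fun k => ?_, fun k => ?_⟩
    · rw [Matrix.mulVecLin_apply, Matrix.mulVec_mulVec, ← pow_succ]
      exact hD1 (k + 1)
    · rw [Matrix.mulVecLin_apply, Matrix.mulVec_mulVec]
      cases k with
      | zero => simpa using hD1 1
      | succ m =>
          have : B' ^ (m + 1) * B = B' ^ m := by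
            rw [pow_succ, Matrix.mul_assoc, hB'B, Matrix.mul_one]
          rw [this]; exact hD2 m
  have : Nontrivial W := ⟨⟨⟨y, hyW⟩, 0, by simpa using hy⟩⟩
  set T : W →ₗ[ℂ] W := (B.mulVecLin).restrict hstab with hT
  obtain ⟨μ, hμ⟩ := Module.End.exists_eigenvalue T
  obtain ⟨v, hv⟩ := hμ.exists_hasEigenvector
  set u : Fin n → ℂ := (v : Fin n → ℂ) with hu
  have hune : u ≠ 0 := fun h => hv.right (by ext; exact congrFun h _)
  have hBu : B *ᵥ u = μ • u := by
    have := hv.apply_eq_smul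
    have h2 := congrArg (Subtype.val) this
    simpa [hT, LinearMap.restrict_apply] using h2
  have hμ0 : μ ≠ 0 := by
    rintro rfl
    apply hune
    have : B' *ᵥ (B *ᵥ u) = 0 := by rw [hBu]; simp
    rwa [Matrix.mulVec_mulVec, hB'B, Matrix.one_mulVec] at this
  have hB'u : B' *ᵥ u = μ⁻¹ • u := by
    have h1 : B' *ᵥ (B *ᵥ u) = u := by rw [Matrix.mulVec_mulVec, hB'B, Matrix.one_mulVec]
    rw [hBu, Matrix.mulVec_smul] at h1
    have := congrArg (fun z => μ⁻¹ • z) h1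
    simpa [smul_smul, inv_mul_cancel₀ hμ0] using this
  have hpow : ∀ k : ℕ, (B ^ k) *ᵥ u = μ ^ k • u := by
    intro k; induction k with
    | zero => simp
    | succ m ih =>
        rw [pow_succ, ← Matrix.mulVec_mulVec, hBu, Matrix.mulVec_smul, ih, smul_smul,
          ← pow_succ']
  have hpow' : ∀ k : ℕ, (B' ^ k) *ᵥ u = (μ⁻¹) ^ k • u := by
    intro k; induction k with
    | zero => simp
    | succ m ih =>
        rw [pow_succ, ← Matrix.mulVec_mulVec, hB'u, Matrix.mulVec_smul, ih, smul_smul,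
          ← pow_succ']
  obtain ⟨D, hD1, hD2⟩ := v.2
  have hunorm : 0 < ‖u‖ := norm_pos_iff.mpr hune
  have habs : ‖μ‖ = 1 := by
    by_contra hne
    rcases lt_or_gt_of_ne hne with hlt | hgt
    · have hpos : 0 < ‖μ‖ := norm_pos_iff.mpr hμ0
      have h1' : 1 < ‖μ⁻¹‖ := by
        rw [norm_inv]
        exact (one_lt_inv₀ hpos).mpr hlt
      obtain ⟨k, hk⟩ := pow_unbounded_of_one_lt (D / ‖u‖) h1'
      have hle := hD2 k
      rw [hpow', norm_smul, norm_pow] at hle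
      have hgt' : D < ‖μ⁻¹‖ ^ k * ‖u‖ := (div_lt_iff₀ hunorm).mp hk
      linarith
    · obtain ⟨k, hk⟩ := pow_unbounded_of_one_lt (D / ‖u‖) hgt
      have hle := hD1 k
      rw [hpow, norm_smul, norm_pow] at hle
      have hgt' : D < ‖μ‖ ^ k * ‖u‖ := (div_lt_iff₀ hunorm).mp hk
      linarith
  refine hev μ (by simpa [Complex.norm_def] using habs) ?_
  have hdet : (μ • (1 : Matrix (Fin n) (Fin n) ℂ) - B).det = 0 := by
    rw [← Matrix.exists_mulVec_eq_zero_iff]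
    refine ⟨u, hune, ?_⟩
    rw [Matrix.sub_mulVec, Matrix.smul_mulVec, Matrix.one_mulVec, hBu, sub_self]
  rw [Polynomial.IsRoot, my_eval_charpoly, hdet]

lemma int_const {X : Type*} [TopologicalSpace X] [PreconnectedSpace X]
    (g : X → ℝ) (hg : Continuous g) (hint : ∀ x, ∃ m : ℤ, g x = m) (x y : X) :
    g x = g y := by
  by_contra hne
  wlog hlt : g x < g y generalizing x y
  · exact this y x (Ne.symm hne) (lt_of_le_of_ne (not_lt.mp hlt) (Ne.symm hne))
  have hS : IsPreconnected (Set.range g) :=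
    (isPreconnected_range hg)
  have hsub : Set.Icc (g x) (g y) ⊆ Set.range g :=
    hS.Icc_subset ⟨x, rfl⟩ ⟨y, rfl⟩
  obtain ⟨mx, hmx⟩ := hint x
  obtain ⟨my, hmy⟩ := hint y
  have hmlt : mx < my := by exact_mod_cast (hmx ▸ hmy ▸ hlt)
  have hmem : (mx : ℝ) + 1/2 ∈ Set.Icc (g x) (g y) := by
    constructor
    · rw [hmx]; linarith
    · rw [hmy]
      have : (mx : ℝ) + 1 ≤ my := by exact_mod_cast hmlt
      linarith
  obtain ⟨z, hz⟩ := hsub hmem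
  obtain ⟨m, hm⟩ := hint z
  rw [hm] at hz
  have : (2 * m : ℝ) = 2 * mx + 1 := by linarith
  have : 2 * m = 2 * mx + 1 := by exact_mod_cast this
  omega

lemma key_real {n : ℕ} (A A' : Matrix (Fin n) (Fin n) ℝ) (hAA' : A * A' = 1)
    (hev : ∀ z : ℂ, ‖z‖ = 1 → ¬ (A.map (fun a => (a : ℂ))).charpoly.IsRoot z)
    (x : Fin n → ℝ) (C : ℝ)
    (h1 : ∀ k : ℕ, ‖(A ^ k) *ᵥ x‖ ≤ C) (h2 : ∀ k : ℕ, ‖(A' ^ k) *ᵥ x‖ ≤ C) :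
    x = 0 := by
  have cast_mulVec : ∀ (M : Matrix (Fin n) (Fin n) ℝ) (z : Fin n → ℝ),
      (M.map (fun a => (a : ℂ))) *ᵥ (fun i => (z i : ℂ)) = fun i => (((M *ᵥ z) i : ℝ) : ℂ) := by
    intro M z
    funext i
    simp only [Matrix.mulVec, dotProduct, Matrix.map_apply]
    push_cast
    rfl
  have cast_norm : ∀ z : Fin n → ℝ, ‖(fun i => (z i : ℂ))‖ = ‖z‖ := by
    intro z
    rw [Pi.norm_def, Pi.norm_def]
    congr 1
    refine Finset.sup_congr rfl fun i _ => ?_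
    ext
    simp [Complex.norm_real]
  have mapmul : ∀ (M N : Matrix (Fin n) (Fin n) ℝ),
      (M * N).map (fun a => (a : ℂ)) = M.map (fun a => (a : ℂ)) * N.map (fun a => (a : ℂ)) :=
    fun M N => by
      show (M * N).map ⇑Complex.ofRealHom = M.map ⇑Complex.ofRealHom * N.map ⇑Complex.ofRealHom
      exact Matrix.map_mul
  have mappow : ∀ (M : Matrix (Fin n) (Fin n) ℝ) (k : ℕ),
      (M ^ k).map (fun a => (a : ℂ)) = (M.map (fun a => (a : ℂ))) ^ k := by
    intro M k
    induction k with
    | zero => simp [Matrix.map_one]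
    | succ m ih => rw [pow_succ, mapmul, ih, pow_succ]
  have hBB' : A.map (fun a => (a : ℂ)) * A'.map (fun a => (a : ℂ)) = 1 := by
    rw [← mapmul, hAA', Matrix.map_one] <;> simp
  have hy := key_bounded_orbit (A.map (fun a => (a:ℂ))) (A'.map (fun a => (a:ℂ))) hBB' hev
    (fun i => (x i : ℂ)) C (fun k => ?_) (fun k => ?_)
  · funext i
    have := congrFun hy i
    simpa using this
  · rw [← mappow, cast_mulVec, cast_norm]
    exact h1 k
  · rw [← mappow, cast_mulVec, cast_norm]
    exact h2 k


namespace Stmt6Aux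

variable {n : ℕ}

lemma continuous_mkT : Continuous (mkT : (Fin n → ℝ) → Torus n) := continuous_quot_mk

lemma mkT_sub (a b : Fin n → ℝ) : mkT (a - b) = mkT a - mkT b := rfl

lemma mkT_surj : Function.Surjective (mkT : (Fin n → ℝ) → Torus n) := fun q =>
  QuotientAddGroup.induction_on q fun x => ⟨x, rfl⟩

lemma mkT_eq_mkT {a b : Fin n → ℝ} : mkT a = mkT b ↔ -a + b ∈ IntLattice n :=
  QuotientAddGroup.eq

lemma mkT_eq_zero {a : Fin n → ℝ} : mkT a = 0 ↔ a ∈ IntLattice n :=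
  QuotientAddGroup.eq_zero_iff a

instance : CompactSpace (Torus n) := by
  refine ⟨?_⟩
  have h1 : IsCompact (Set.Icc (0 : Fin n → ℝ) 1) := isCompact_Icc
  have h2 : (Set.univ : Set (Torus n)) = mkT '' (Set.Icc 0 1) := by
    refine (Set.eq_univ_iff_forall.mpr fun q => ?_).symm
    obtain ⟨x, rfl⟩ := mkT_surj q
    refine ⟨fun i => Int.fract (x i), ⟨fun i => (Int.fract_nonneg _), fun i => (Int.fract_lt_one _).le⟩, ?_⟩
    rw [mkT_eq_mkT]
    intro i
    refine ⟨⌊x i⌋, ?_⟩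
    simp only [Pi.add_apply, Pi.neg_apply, Int.fract]
    ring
  rw [h2]
  exact h1.image continuous_mkT

instance : ConnectedSpace (Torus n) := by
  rw [connectedSpace_iff_univ]
  have h : (Set.univ : Set (Torus n)) = Set.range mkT := (Set.range_eq_univ.mpr mkT_surj).symm
  rw [h]
  exact isConnected_range continuous_mkT

lemma toralMap_mkT (M : Matrix (Fin n) (Fin n) ℤ) (x : Fin n → ℝ) :
    toralMap M (mkT x) = mkT ((M.map (Int.cast : ℤ → ℝ)) *ᵥ x) := rfl

lemma toralMap_sub (M : Matrix (Fin n) (Fin n) ℤ) (a b : Torus n) :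
    toralMap M (a - b) = toralMap M a - toralMap M b := by
  unfold toralMap
  exact map_sub _ a b

end Stmt6Aux

open Stmt6Aux

end Stmt6Helpers

open Stmt6Aux

/-- If `γ ∈ SL(n,ℤ)` is hyperbolic and `h₁, h₂ : 𝕋ⁿ → 𝕋ⁿ` are continuous maps
homotopic to the identity (`hᵢ(x) = x + φᵢ(x)` with `φᵢ : 𝕋ⁿ → ℝⁿ` continuous), both
semiconjugating a homeomorphism `f` with `ρ₀(γ)`, then `h₁ - h₂` is a constant `c` which is
a fixed point of `ρ₀(γ)` on the torus. -/
theorem stmt_6 {n : ℕ} (γ : Matrix.SpecialLinearGroup (Fin n) ℤ)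
    (hγ : HyperbolicZ (γ : Matrix (Fin n) (Fin n) ℤ))
    (f : Torus n ≃ₜ Torus n)
    (h₁ h₂ : Torus n → Torus n) (hc₁ : Continuous h₁) (hc₂ : Continuous h₂)
    (φ₁ φ₂ : Torus n → Fin n → ℝ) (hφ₁ : Continuous φ₁) (hφ₂ : Continuous φ₂)
    (hh₁ : ∀ x, h₁ x = x + mkT (φ₁ x)) (hh₂ : ∀ x, h₂ x = x + mkT (φ₂ x))
    (hsemi₁ : h₁ ∘ f = toralMap (γ : Matrix (Fin n) (Fin n) ℤ) ∘ h₁)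
    (hsemi₂ : h₂ ∘ f = toralMap (γ : Matrix (Fin n) (Fin n) ℤ) ∘ h₂) :
    ∃ c : Torus n, (∀ x, h₁ x - h₂ x = c) ∧
      toralMap (γ : Matrix (Fin n) (Fin n) ℤ) c = c := by
  classical
  set Aℤ : Matrix (Fin n) (Fin n) ℤ := (γ : Matrix (Fin n) (Fin n) ℤ) with hAZ
  set A : Matrix (Fin n) (Fin n) ℝ := Aℤ.map (Int.cast : ℤ → ℝ) with hA
  set A' : Matrix (Fin n) (Fin n) ℝ :=
    ((γ⁻¹ : Matrix.SpecialLinearGroup (Fin n) ℤ) : Matrix (Fin n) (Fin n) ℤ).map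
      (Int.cast : ℤ → ℝ) with hA'
  have castmul : ∀ (M N : Matrix (Fin n) (Fin n) ℤ),
      (M * N).map (Int.cast : ℤ → ℝ) = M.map (Int.cast : ℤ → ℝ) * N.map (Int.cast : ℤ → ℝ) := by
    intro M N
    show (M * N).map ⇑(Int.castRingHom ℝ) = M.map ⇑(Int.castRingHom ℝ) * N.map ⇑(Int.castRingHom ℝ)
    exact Matrix.map_mul
  have hAA' : A * A' = 1 := by
    rw [hA, hA', hAZ, ← castmul]
    rw [← Matrix.SpecialLinearGroup.coe_mul, mul_inv_cancel,
      Matrix.SpecialLinearGroup.coe_one, Matrix.map_one _ (by simp) (by simp)]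
  have hA'A : A' * A = 1 := mul_eq_one_comm.mp hAA'
  have hmapℂ : A.map (fun a => (a : ℂ)) = Aℤ.map (fun a => (a : ℂ)) := by
    rw [hA, Matrix.map_map]
    congr 1
  have hevA : ∀ z : ℂ, ‖z‖ = 1 → ¬ (A.map (fun a => (a : ℂ))).charpoly.IsRoot z := by
    intro z hz
    rw [hmapℂ]
    exact hγ z hz
  set v : Torus n → Fin n → ℝ := fun x => φ₁ x - φ₂ x with hv
  have hvc : Continuous v := hφ₁.sub hφ₂
  have hdiff : ∀ x, h₁ x - h₂ x = mkT (v x) := by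
    intro x
    rw [hh₁, hh₂, hv]
    simp only
    rw [mkT_sub]
    abel
  have hAv : ∀ x, mkT (v (f x)) = mkT (A *ᵥ v x) := by
    intro x
    calc mkT (v (f x)) = h₁ (f x) - h₂ (f x) := (hdiff _).symm
      _ = toralMap Aℤ (h₁ x) - toralMap Aℤ (h₂ x) := by
          have e1 := congrFun hsemi₁ x
          have e2 := congrFun hsemi₂ x
          simp only [Function.comp_apply] at e1 e2
          rw [e1, e2]
      _ = toralMap Aℤ (h₁ x - h₂ x) := (toralMap_sub _ _ _).symm
      _ = toralMap Aℤ (mkT (v x)) := by rw [hdiff]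
      _ = mkT (A *ᵥ v x) := toralMap_mkT _ _
  set g : Torus n → Fin n → ℝ := fun x => v (f x) - A *ᵥ v x with hg
  have hgc : Continuous g := by
    refine (hvc.comp f.continuous).sub ?_
    exact (A.mulVecLin.continuous_of_finiteDimensional).comp hvc
  have hgint : ∀ x, g x ∈ IntLattice n := by
    intro x
    apply mkT_eq_zero.mp
    rw [hg]
    simp only
    rw [mkT_sub, hAv, sub_self]
  set c₀ : Fin n → ℝ := g (mkT 0) with hc₀
  have hgconst : ∀ x, g x = c₀ := by
    intro x
    funext i
    exact int_const (fun y => g y i) ((continuous_apply i).comp hgc)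
      (fun y => by
        obtain ⟨m, hm⟩ := hgint y i
        exact ⟨m, hm⟩) x (mkT 0)
  have hc₀lat : c₀ ∈ IntLattice n := hgint _
  have hdetZ : (1 - Aℤ).det ≠ 0 := by
    intro h0
    apply hγ 1 (by simp)
    rw [Polynomial.IsRoot, my_eval_charpoly, one_smul]
    have hcast : (1 - Aℤ.map (fun a => (a : ℂ))) = ((1 : Matrix (Fin n) (Fin n) ℤ) - Aℤ).map
        ⇑(Int.castRingHom ℂ) := by
      ext i j
      rcases eq_or_ne i j with rfl | h
      · simp [Matrix.one_apply, Matrix.map_apply]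
      · simp [Matrix.one_apply_ne h, Matrix.map_apply]
    rw [hcast, ← RingHom.mapMatrix_apply, ← RingHom.map_det, h0]
    simp
  have hdetR : IsUnit (A - 1).det := by
    rw [isUnit_iff_ne_zero]
    have hcast : A - 1 = ((Aℤ - 1 : Matrix (Fin n) (Fin n) ℤ)).map ⇑(Int.castRingHom ℝ) := by
      ext i j
      rcases eq_or_ne i j with rfl | h
      · simp [hA, Matrix.one_apply, Matrix.map_apply]
      · simp [hA, Matrix.one_apply_ne h, Matrix.map_apply]
    rw [hcast, ← RingHom.mapMatrix_apply, ← RingHom.map_det]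
    have : (Aℤ - 1).det ≠ 0 := by
      intro h0
      apply hdetZ
      rw [← neg_sub Aℤ 1, Matrix.det_neg, h0, mul_zero]
    simpa using this
  set d : Fin n → ℝ := (A - 1)⁻¹ *ᵥ c₀ with hdd
  have hd : (A - 1) *ᵥ d = c₀ := by
    rw [hdd, Matrix.mulVec_mulVec, Matrix.mul_nonsing_inv _ hdetR, Matrix.one_mulVec]
  have hAd : A *ᵥ d = c₀ + d := by
    have h' := hd
    rw [Matrix.sub_mulVec, Matrix.one_mulVec] at h'
    rw [← h']
    abel
  set w : Torus n → Fin n → ℝ := fun x => v x + d with hwdef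
  have hwc : Continuous w := hvc.add continuous_const
  have hvf : ∀ x, v (f x) = A *ᵥ v x + c₀ := by
    intro x
    have h' := hgconst x
    rw [hg] at h'
    simp only at h'
    rw [← h']
    abel
  have hwf : ∀ x, w (f x) = A *ᵥ w x := by
    intro x
    rw [hwdef]
    simp only
    rw [Matrix.mulVec_add, hvf, hAd]
    abel
  have hwf' : ∀ x, A' *ᵥ w x = w (f.symm x) := by
    intro x
    have h1 : w x = A *ᵥ w (f.symm x) := by
      rw [← hwf (f.symm x), Homeomorph.apply_symm_apply]
    rw [h1, Matrix.mulVec_mulVec, hA'A, Matrix.one_mulVec]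
  obtain ⟨C, hC⟩ : ∃ C, ∀ x, ‖w x‖ ≤ C := by
    obtain ⟨x₀, -, hx₀⟩ := isCompact_univ.exists_isMaxOn ⟨mkT 0, trivial⟩
      (hwc.norm.continuousOn)
    exact ⟨‖w x₀‖, fun x => hx₀ (Set.mem_univ x)⟩
  have hiter1 : ∀ (k : ℕ) (x : Torus n), (A ^ k) *ᵥ w x = w ((⇑f)^[k] x) := by
    intro k
    induction k with
    | zero => intro x; simp
    | succ m ih =>
        intro x
        rw [pow_succ', ← Matrix.mulVec_mulVec, ih, ← hwf]
        exact congrArg w (Function.iterate_succ_apply' (⇑f) m x).symm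
  have hiter2 : ∀ (k : ℕ) (x : Torus n), (A' ^ k) *ᵥ w x = w ((⇑f.symm)^[k] x) := by
    intro k
    induction k with
    | zero => intro x; simp
    | succ m ih =>
        intro x
        rw [pow_succ', ← Matrix.mulVec_mulVec, ih, hwf']
        exact congrArg w (Function.iterate_succ_apply' (⇑f.symm) m x).symm
  have hw0 : ∀ x, w x = 0 := by
    intro x
    refine key_real A A' hAA' hevA (w x) C (fun k => ?_) (fun k => ?_)
    · rw [hiter1]; exact hC _
    · rw [hiter2]; exact hC _
  have hvconst : ∀ x, v x = -d := by
    intro x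
    have h' := hw0 x
    rw [hwdef] at h'
    simp only at h'
    rw [← neg_eq_of_add_eq_zero_left h']
  refine ⟨mkT (-d), fun x => ?_, ?_⟩
  · rw [hdiff, hvconst]
  · rw [toralMap_mkT, ← hA, mkT_eq_mkT]
    have hval : A *ᵥ (-d) = -(c₀ + d) := by
      rw [Matrix.mulVec_neg, hAd]
    rw [hval]
    have : -(-(c₀ + d)) + -d = c₀ := by abel
    rw [this]
    exact hc₀lat
end
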